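/- Let π : Y → X be an open map of topological spaces and suppose (α_i) is a family of continuous functions on X subordinate to a locally finite cover, φ_i ∈ C_c(Y) nonnegative with π({φ_i > 0}) ⊇ V_i for each i, where (V_i) is a locally finite open cover of X. Then φ(y) = Σ_i φ_i(y) α_i(π(y)) defines a continuous function on Y, and for every x ∈ X there exists y ∈ π⁻¹(x) with φ(y) > 0. -/

import Mathlib

open Topology

/-- Gluing local cut-off functions `φ_i` along a partition of unity `α_i` subordinate to
a locally finite open cover of `X` yields a well-defined continuous function
`φ(y) = Σ_i φ_i(y) α_i(π(y))` whose positivity set surjects onto `X` under `π`. -/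
theorem stmt14 {Y X : Type*} [TopologicalSpace Y] [TopologicalSpace X]
    [LocallyCompactSpace Y] [T2Space Y] [LocallyCompactSpace X] [T2Space X]
    (π : Y → X) (hπc : Continuous π) (hπo : IsOpenMap π) (hπs : Function.Surjective π)
    (V : ℕ → Set X) (hVo : ∀ i, IsOpen (V i)) (hVcov : (⋃ i, V i) = Set.univ)
    (hVlf : LocallyFinite V)
    (α : ℕ → X → ℝ) (hαc : ∀ i, Continuous (α i))
    (hα0 : ∀ i x, 0 ≤ α i x) (hα1 : ∀ i x, α i x ≤ 1)
    (hαsupp : ∀ i, tsupport (α i) ⊆ V i)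
    (hαsum : ∀ x, HasSum (fun i => α i x) 1)
    (φ' : ℕ → Y → ℝ) (hφc : ∀ i, Continuous (φ' i))
    (hφ0 : ∀ i y, 0 ≤ φ' i y) (hφs : ∀ i, HasCompactSupport (φ' i))
    (hφV : ∀ i, V i ⊆ π '' {y | 0 < φ' i y}) :
    (∀ y, Summable fun i => φ' i y * α i (π y)) ∧
    Continuous (fun y => ∑' i, φ' i y * α i (π y)) ∧
    (∀ x : X, ∃ y, π y = x ∧ 0 < ∑' i, φ' i y * α i (π y)) := by
  have hsupp : ∀ y, (Function.support fun i => φ' i y * α i (π y)) ⊆ {i | π y ∈ V i} := by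
    intro y i hi
    have : α i (π y) ≠ 0 := fun h => hi (by simp [h])
    exact hαsupp i (subset_closure this)
  have hfin : ∀ y, (Function.support fun i => φ' i y * α i (π y)).Finite := fun y =>
    (hVlf.point_finite (π y)).subset (hsupp y)
  have hsummable : ∀ y, Summable fun i => φ' i y * α i (π y) := fun y =>
    summable_of_finite_support (hfin y)
  refine ⟨hsummable, ?_, ?_⟩
  · have heq : (fun y => ∑' i, φ' i y * α i (π y)) =
        fun y => ∑ᶠ i, φ' i y * α i (π y) := by
      funext y
      exact tsum_eq_finsum (hfin y)
    rw [heq]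
    refine continuous_finsum (fun i => (hφc i).mul ((hαc i).comp hπc)) ?_
    refine ((hVlf.preimage_continuous hπc).subset ?_)
    intro i y hy
    exact hsupp y hy
  · intro x
    obtain ⟨i, hi⟩ : ∃ i, 0 < α i x := by
      by_contra h
      push_neg at h
      have : ∀ i, α i x = 0 := fun i => le_antisymm (h i) (hα0 i x)
      have := (hαsum x).unique (show HasSum (fun i => α i x) 0 by simpa [this] using (hasSum_zero : HasSum (fun _ : ℕ => (0:ℝ)) 0))
      norm_num at this
    have hxV : x ∈ V i := hαsupp i (subset_closure hi.ne')
    obtain ⟨y, hy, hyx⟩ := hφV i hxV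
    refine ⟨y, hyx, ?_⟩
    have hterm : 0 < φ' i y * α i (π y) := by
      rw [hyx]; exact mul_pos hy hi
    calc (0:ℝ) < φ' i y * α i (π y) := hterm
      _ ≤ ∑' j, φ' j y * α j (π y) :=
        Summable.le_tsum (hsummable y) i fun j _ => mul_nonneg (hφ0 j y) (hα0 j (π y))
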